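/- arXiv:1712.09788 — 5 statements merged into one kernel-verified Lean document; each statement's English description precedes it below -/
import Mathlib

section
/- If V is a finite-dimensional complex vector space with a prevaluation v : V \ {0} -> Z^n, then the cardinality of the image v(V \ {0}) is at most dim V. -/
section Aux

variable {n : ℕ} {V : Type*} [AddCommGroup V] [Module ℂ V]

/-- Two-vector lemma: if `v x < v y` then `x + y ≠ 0` and `v (x+y) = v x`. -/
lemma prevaluation_add_of_lt (v : V → Lex (Fin n → ℤ))
    (hscal : ∀ f : V, f ≠ 0 → ∀ c : ℂ, c ≠ 0 → v (c • f) = v f)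
    (hmin : ∀ f g : V, f ≠ 0 → g ≠ 0 → f + g ≠ 0 →
      v f ≤ v (f + g) ∨ v g ≤ v (f + g))
    {x y : V} (hx : x ≠ 0) (hy : y ≠ 0) (hlt : v x < v y) :
    x + y ≠ 0 ∧ v (x + y) = v x := by
  have hne : x + y ≠ 0 := by
    intro h
    have : y = (-1 : ℂ) • x := by
      rw [neg_one_smul]
      exact (neg_eq_of_add_eq_zero_right h).symm
    rw [this, hscal x hx (-1) (by norm_num)] at hlt
    exact lt_irrefl _ hlt
  refine ⟨hne, ?_⟩
  have hny : (-1 : ℂ) • y ≠ 0 := by simpa using hy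
  have hxy : (x + y) + (-1 : ℂ) • y = x := by
    simp [add_assoc]
  have h2 := hmin (x + y) ((-1 : ℂ) • y) hne hny (by rw [hxy]; exact hx)
  rw [hxy, hscal y hy (-1) (by norm_num)] at h2
  have hle : v (x + y) ≤ v x := by
    rcases h2 with h | h
    · exact h
    · exact absurd h (not_le_of_gt hlt)
  rcases hmin x y hx hy hne with h | h
  · exact le_antisymm hle h
  · exact absurd (h.trans hle) (not_le_of_gt hlt)

lemma prevaluation_sum_ne_zero (v : V → Lex (Fin n → ℤ))
    (hscal : ∀ f : V, f ≠ 0 → ∀ c : ℂ, c ≠ 0 → v (c • f) = v f)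
    (hmin : ∀ f g : V, f ≠ 0 → g ≠ 0 → f + g ≠ 0 →
      v f ≤ v (f + g) ∨ v g ≤ v (f + g))
    {ι : Type*} (f : ι → V) (hf : ∀ i, f i ≠ 0)
    (hinj : ∀ i j, v (f i) = v (f j) → i = j)
    (s : Finset ι) (c : ι → ℂ) (hc : ∀ i ∈ s, c i ≠ 0) (hs : s.Nonempty) :
    (∑ i ∈ s, c i • f i) ≠ 0 ∧ ∃ j ∈ s, v (∑ i ∈ s, c i • f i) = v (f j) := by
  classical
  induction s using Finset.induction_on with
  | empty => exact absurd hs (by simp)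
  | @insert a s' ha ih =>
    have hca : c a ≠ 0 := hc a (Finset.mem_insert_self _ _)
    have hxa : c a • f a ≠ 0 := smul_ne_zero hca (hf a)
    have hva : v (c a • f a) = v (f a) := hscal (f a) (hf a) (c a) hca
    by_cases hs' : s'.Nonempty
    · obtain ⟨hne, j, hj, hvj⟩ := ih (fun i hi => hc i (Finset.mem_insert_of_mem hi)) hs'
      have haj : a ≠ j := fun h => ha (h ▸ hj)
      have hvne : v (c a • f a) ≠ v (∑ i ∈ s', c i • f i) := by
        rw [hva, hvj]
        exact fun h => haj (hinj a j h)
      rw [Finset.sum_insert ha]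
      letI : LinearOrder (Lex (Fin n → ℤ)) :=
        @Pi.Lex.linearOrder _ _ _
          (inferInstance : WellFoundedLT (Fin n)) _
      rcases hvne.lt_or_gt with hlt | hgt
      · obtain ⟨h1, h2⟩ := prevaluation_add_of_lt v hscal hmin hxa hne hlt
        exact ⟨h1, a, Finset.mem_insert_self _ _, h2.trans hva⟩
      · obtain ⟨h1, h2⟩ := prevaluation_add_of_lt v hscal hmin hne hxa hgt
        rw [add_comm] at h1 h2
        exact ⟨h1, j, Finset.mem_insert_of_mem hj, h2.trans hvj⟩
    · rw [Finset.not_nonempty_iff_eq_empty] at hs'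
      subst hs'
      refine ⟨by simpa using hxa, a, Finset.mem_insert_self _ _, ?_⟩
      simpa using hva

end Aux

/-- If `V` is a finite-dimensional complex vector space with a
(ℤⁿ-)prevaluation `v : V \ {0} → ℤⁿ` (lexicographic order), then the image
`v(V \ {0})` is finite of cardinality at most `dim V`. -/
theorem prevaluation_image_card_le_finrank {n : ℕ} {V : Type*} [AddCommGroup V]
    [Module ℂ V] [FiniteDimensional ℂ V]
    (v : V → Lex (Fin n → ℤ))
    (hscal : ∀ f : V, f ≠ 0 → ∀ c : ℂ, c ≠ 0 → v (c • f) = v f)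
    (hmin : ∀ f g : V, f ≠ 0 → g ≠ 0 → f + g ≠ 0 →
      v f ≤ v (f + g) ∨ v g ≤ v (f + g)) :
    (v '' {f : V | f ≠ 0}).Finite ∧
      (v '' {f : V | f ≠ 0}).ncard ≤ Module.finrank ℂ V := by
  classical
  set S := v '' {f : V | f ≠ 0} with hS
  -- choose representatives
  have hrep : ∀ a : S, ∃ f : V, f ≠ 0 ∧ v f = (a : Lex (Fin n → ℤ)) := by
    rintro ⟨a, f, hf, rfl⟩
    exact ⟨f, hf, rfl⟩
  choose F hF0 hFv using hrep
  have hinj : ∀ i j : S, v (F i) = v (F j) → i = j := by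
    intro i j h
    rw [hFv i, hFv j] at h
    exact Subtype.ext h
  have hli : LinearIndependent ℂ F := by
    rw [linearIndependent_iff']
    intro s g hsum i hi
    by_contra hg
    set s' := s.filter (fun i => g i ≠ 0) with hs'
    have hsum' : (∑ i ∈ s', g i • F i) = 0 := by
      rw [hs', Finset.sum_filter_of_ne (fun i _ h => by
        intro hgi; exact h (by rw [hgi, zero_smul]))]
      exact hsum
    have hne : s'.Nonempty := ⟨i, Finset.mem_filter.mpr ⟨hi, hg⟩⟩
    have := (prevaluation_sum_ne_zero v hscal hmin F hF0 hinj s' g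
      (fun i hi => (Finset.mem_filter.mp hi).2) hne).1
    exact this hsum'
  have hfin : Finite S := hli.finite
  have hSfin : S.Finite := Set.toFinite S
  refine ⟨hSfin, ?_⟩
  haveI : Fintype S := hSfin.fintype
  have hcard := hli.fintype_card_le_finrank
  rwa [Set.ncard_eq_toFinset_card', Set.toFinset_card]
end

section
/- Let v be a prevaluation on a finite-dimensional complex vector space V. Then dim V equals the sum over all \alpha in Z^n of the dimensions of the leaves \hat{V}_\alpha := V_{>= \alpha} / \bigcup_{\beta > \alpha} V_{>= \beta}. -/
/-- Let `v` be a prevaluation on a finite-dimensional complex vector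
space `V` with values in `ℤⁿ` (lexicographic order).  For `α ∈ ℤⁿ` let `W α` be the
subspace `V_{≥α} = {f : f = 0 ∨ v f ≥ α}`; the leaf above `α` is the quotient of
`W α` by `⋃_{β > α} V_{≥β}` (which, as a supremum of the antitone family, is the
submodule `⨆ β > α, W β` viewed inside `W α`).  Then `dim V` is the sum over all
`α ∈ ℤⁿ` of the dimensions of the leaves. -/
theorem prevaluation_finrank_eq_sum_leaf_dims {n : ℕ} {V : Type*} [AddCommGroup V]
    [Module ℂ V] [FiniteDimensional ℂ V]
    (v : V → Lex (Fin n → ℤ))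
    (hscal : ∀ f : V, f ≠ 0 → ∀ c : ℂ, c ≠ 0 → v (c • f) = v f)
    (hmin : ∀ f g : V, f ≠ 0 → g ≠ 0 → f + g ≠ 0 →
      v f ≤ v (f + g) ∨ v g ≤ v (f + g))
    (W : Lex (Fin n → ℤ) → Submodule ℂ V)
    (hW : ∀ α (f : V), f ∈ W α ↔ f = 0 ∨ α ≤ v f) :
    Module.finrank ℂ V =
      ∑ᶠ α : Lex (Fin n → ℤ),
        Module.finrank ℂ
          ((W α) ⧸ (Submodule.comap (W α).subtype (⨆ β > α, W β))) := by
  classical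
  -- a linear order on `Lex (Fin n → ℤ)` compatible with the partial order in the statement
  have tri : ∀ a b : Lex (Fin n → ℤ), a < b ∨ a = b ∨ b < a := fun a b =>
    lt_trichotomy a b
  letI : LinearOrder (Lex (Fin n → ℤ)) :=
    { (inferInstance : PartialOrder (Lex (Fin n → ℤ))) with
      le_total := fun a b => by
        rcases tri a b with h | rfl | h
        exacts [Or.inl h.le, Or.inl le_rfl, Or.inr h.le]
      toDecidableLE := Classical.decRel _
      min := fun a b => @ite _ (a ≤ b) (Classical.decRel LE.le a b) a b
      max := fun a b => @ite _ (a ≤ b) (Classical.decRel LE.le a b) b a }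
  -- the submodule `U α = {f | f = 0 ∨ α < v f}`
  set U : Lex (Fin n → ℤ) → Submodule ℂ V := fun α =>
    { carrier := {f | f = 0 ∨ α < v f}
      zero_mem' := Or.inl rfl
      add_mem' := by
        intro f g hf hg
        by_cases hf0 : f = 0
        · simpa [hf0] using hg
        by_cases hg0 : g = 0
        · simpa [hg0] using hf
        by_cases hfg : f + g = 0
        · exact Or.inl hfg
        rcases hf with rfl | hf; · exact absurd rfl hf0
        rcases hg with rfl | hg; · exact absurd rfl hg0
        rcases hmin f g hf0 hg0 hfg with h | h
        · exact Or.inr (lt_of_lt_of_le hf h)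
        · exact Or.inr (lt_of_lt_of_le hg h)
      smul_mem' := by
        intro c f hf
        by_cases hc : c = 0
        · exact Or.inl (by simp [hc])
        by_cases hf0 : f = 0
        · exact Or.inl (by simp [hf0])
        rcases hf with rfl | hf; · exact absurd rfl hf0
        exact Or.inr (by rwa [hscal f hf0 c hc]) } with hUdef
  have hU : ∀ α (f : V), f ∈ U α ↔ f = 0 ∨ α < v f := fun α f => Iff.rfl
  have hUW : ∀ α, U α ≤ W α := by
    intro α f hf
    rcases (hU α f).1 hf with rfl | h
    · exact (W α).zero_mem
    · exact (hW α f).2 (Or.inr h.le)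
  have hsup : ∀ α, (⨆ β > α, W β) = U α := by
    intro α
    apply le_antisymm
    · refine iSup₂_le fun β hβ f hf => ?_
      rcases (hW β f).1 hf with rfl | h
      · exact (U α).zero_mem
      · exact (hU α f).2 (Or.inr (lt_of_lt_of_le hβ h))
    · intro f hf
      rcases (hU α f).1 hf with rfl | h
      · exact Submodule.zero_mem _
      · exact Submodule.mem_iSup_of_mem (v f) <| Submodule.mem_iSup_of_mem h <|
          (hW (v f) f).2 (Or.inr le_rfl)
  -- leaf dimension
  set L : Lex (Fin n → ℤ) → ℕ := fun α =>
    Module.finrank ℂ ((W α) ⧸ (Submodule.comap (W α).subtype (U α))) with hLdef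
  have hgoal : (∑ᶠ α : Lex (Fin n → ℤ),
      Module.finrank ℂ ((W α) ⧸ (Submodule.comap (W α).subtype (⨆ β > α, W β))))
      = ∑ᶠ α, L α := finsum_congr fun α => by rw [hsup α]
  rw [hgoal]
  -- rank identity
  have hrank : ∀ α, Module.finrank ℂ (W α) = L α + Module.finrank ℂ (U α) := by
    intro α
    have h1 := Submodule.finrank_quotient_add_finrank
      (Submodule.comap (W α).subtype (U α))
    have h2 := (Submodule.comapSubtypeEquivOfLe (hUW α)).finrank_eq
    rw [h2] at h1
    simp only [hLdef]
    omega
  -- the set of values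
  set T : Set (Lex (Fin n → ℤ)) := {α | ∃ f : V, f ≠ 0 ∧ v f = α} with hTdef
  have hWT : ∀ α (f : V), f ≠ 0 → f ∈ W α → v f ∈ T ∧ α ≤ v f := by
    intro α f hf0 hf
    rcases (hW α f).1 hf with rfl | h
    · exact absurd rfl hf0
    · exact ⟨⟨f, hf0, rfl⟩, h⟩
  have hWU : ∀ α β, α < β → W β ≤ U α := by
    intro α β hαβ f hf
    rcases (hW β f).1 hf with rfl | h
    · exact (U α).zero_mem
    · exact (hU α f).2 (Or.inr (lt_of_lt_of_le hαβ h))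
  have hUlt : ∀ α ∈ T, U α < W α := by
    rintro α ⟨f, hf0, rfl⟩
    refine lt_of_le_of_ne (hUW _) fun h => ?_
    have hfW : f ∈ W (v f) := (hW _ f).2 (Or.inr le_rfl)
    rw [← h] at hfW
    rcases (hU _ f).1 hfW with rfl | hlt
    · exact hf0 rfl
    · exact absurd hlt (lt_irrefl _)
  -- T is finite
  have hfin : T.Finite := by
    apply Set.Finite.of_finite_image (f := fun α => Module.finrank ℂ (W α))
    · exact (Set.finite_Iic (Module.finrank ℂ V)).subset
        (by rintro x ⟨α, _, rfl⟩; exact Submodule.finrank_le _)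
    · intro a ha b hb hab
      dsimp only at hab
      by_contra hne
      have key : ∀ x y : Lex (Fin n → ℤ), x ∈ T → y ∈ T → x < y →
          Module.finrank ℂ (W y) < Module.finrank ℂ (W x) := by
        intro x y hx hy hxy
        exact Submodule.finrank_lt_finrank_of_lt (lt_of_le_of_lt (hWU x y hxy) (hUlt x hx))
      rcases tri a b with h | h | h
      · exact absurd hab (by have := key a b ha hb h; omega)
      · exact hne h
      · exact absurd hab (by have := key b a hb ha h; omega)
  -- L vanishes off T
  have hL0 : ∀ α, α ∉ T → L α = 0 := by
    intro α hα
    have hWUeq : W α ≤ U α := by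
      intro f hf
      by_cases hf0 : f = 0
      · exact hf0 ▸ (U α).zero_mem
      rcases hWT α f hf0 hf with ⟨hvf, hle⟩
      rcases lt_or_eq_of_le hle with h | h
      · exact (hU α f).2 (Or.inr h)
      · exact absurd (h ▸ hvf) hα
    have htop : Submodule.comap (W α).subtype (U α) = ⊤ := by
      rw [eq_top_iff]
      exact fun x _ => hWUeq x.2
    have : Subsingleton ((W α) ⧸ (Submodule.comap (W α).subtype (U α))) :=
      Submodule.Quotient.subsingleton_iff.2 htop
    exact Module.finrank_zero_of_subsingleton
  have hsupp : Function.support L ⊆ hfin.toFinset := by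
    intro α hα
    rw [Set.Finite.coe_toFinset]
    by_contra h
    exact hα (hL0 α h)
  rw [finsum_eq_finset_sum_of_support_subset L hsupp]
  -- main induction: finrank (W α) is the sum of leaf dims over values ≥ α
  have key : ∀ k : ℕ, ∀ α : Lex (Fin n → ℤ),
      (hfin.toFinset.filter (fun β => α ≤ β)).card = k →
      Module.finrank ℂ (W α) = ∑ β ∈ hfin.toFinset.filter (fun β => α ≤ β), L β := by
    intro k
    induction k using Nat.strong_induction_on with
    | _ k IH =>
      intro α hcard
      rcases (hfin.toFinset.filter (fun β => α ≤ β)).eq_empty_or_nonempty with he | hne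
      · rw [he, Finset.sum_empty]
        have hbot : W α = ⊥ := by
          rw [eq_bot_iff]
          intro f hf
          by_cases hf0 : f = 0
          · simp [hf0]
          rcases hWT α f hf0 hf with ⟨hvf, hle⟩
          have : v f ∈ hfin.toFinset.filter (fun β => α ≤ β) := by
            simp only [Finset.mem_filter, Set.Finite.mem_toFinset]
            exact ⟨hvf, hle⟩
          rw [he] at this
          exact absurd this (Finset.notMem_empty _)
        rw [hbot, finrank_bot]
      · set s := hfin.toFinset.filter (fun β => α ≤ β) with hs
        set α' := s.min' hne with hα'
        have hα'mem := s.min'_mem hne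
        have hα'T : α' ∈ T :=
          hfin.mem_toFinset.1 (Finset.mem_filter.1 hα'mem).1
        have hαα' : α ≤ α' := (Finset.mem_filter.1 hα'mem).2
        -- W α = W α'
        have hWeq : W α = W α' := by
          apply le_antisymm
          · intro f hf
            by_cases hf0 : f = 0
            · exact hf0 ▸ (W α').zero_mem
            rcases hWT α f hf0 hf with ⟨hvf, hle⟩
            have hmem : v f ∈ s := Finset.mem_filter.2 ⟨hfin.mem_toFinset.2 hvf, hle⟩
            exact (hW α' f).2 (Or.inr (s.min'_le _ hmem))
          · intro f hf
            rcases (hW α' f).1 hf with rfl | h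
            · exact (W α).zero_mem
            · exact (hW α f).2 (Or.inr (le_trans hαα' h))
        -- s = insert α' s' with s' the values > α'
        set s' := hfin.toFinset.filter (fun β => α' < β) with hs'
        have hss' : s = insert α' s' := by
          ext β
          simp only [hs, hs', Finset.mem_insert, Finset.mem_filter,
            Set.Finite.mem_toFinset]
          constructor
          · rintro ⟨hβT, hβ⟩
            rcases eq_or_ne β α' with h | h
            · exact Or.inl h
            · refine Or.inr ⟨hβT, lt_of_le_of_ne ?_ (Ne.symm h)⟩
              exact s.min'_le β (Finset.mem_filter.2 ⟨hfin.mem_toFinset.2 hβT, hβ⟩)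
          · rintro (rfl | ⟨hβT, hβ⟩)
            · exact ⟨hα'T, hαα'⟩
            · exact ⟨hβT, le_trans hαα' hβ.le⟩
        have hα'nots' : α' ∉ s' := fun hmem =>
          absurd (Finset.mem_filter.1 hmem).2 (lt_irrefl _)
        have hsum : ∑ β ∈ s, L β = L α' + ∑ β ∈ s', L β := by
          rw [hss', Finset.sum_insert hα'nots']
        -- compute finrank (U α')
        have hUval : Module.finrank ℂ (U α') = ∑ β ∈ s', L β := by
          rcases s'.eq_empty_or_nonempty with he' | hne'
          · have hUbot : U α' = ⊥ := by
              rw [eq_bot_iff]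
              intro f hf
              rcases (hU α' f).1 hf with rfl | h
              · simp
              by_cases hf0 : f = 0
              · simp [hf0]
              have hvf : v f ∈ T := ⟨f, hf0, rfl⟩
              have : v f ∈ s' := Finset.mem_filter.2 ⟨hfin.mem_toFinset.2 hvf, h⟩
              rw [he'] at this
              exact absurd this (Finset.notMem_empty _)
            rw [hUbot, finrank_bot, he', Finset.sum_empty]
          · set γ := s'.min' hne' with hγ
            have hγmem := s'.min'_mem hne'
            have hγgt : α' < γ := (Finset.mem_filter.1 hγmem).2
            have hUeq : U α' = W γ := by
              apply le_antisymm
              · intro f hf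
                rcases (hU α' f).1 hf with rfl | h
                · exact (W γ).zero_mem
                by_cases hf0 : f = 0
                · exact hf0 ▸ (W γ).zero_mem
                have hmem : v f ∈ s' :=
                  Finset.mem_filter.2 ⟨hfin.mem_toFinset.2 ⟨f, hf0, rfl⟩, h⟩
                exact (hW γ f).2 (Or.inr (s'.min'_le _ hmem))
              · exact hWU α' γ hγgt
            have hfilterγ : hfin.toFinset.filter (fun β => γ ≤ β) = s' := by
              ext β
              simp only [hs', Finset.mem_filter, Set.Finite.mem_toFinset]
              constructor
              · rintro ⟨hβT, hβ⟩
                exact ⟨hβT, lt_of_lt_of_le hγgt hβ⟩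
              · rintro ⟨hβT, hβ⟩
                exact ⟨hβT, s'.min'_le β
                  (Finset.mem_filter.2 ⟨hfin.mem_toFinset.2 hβT, hβ⟩)⟩
            have hcard' : s'.card < k := by
              rw [← hcard, hss']
              rw [Finset.card_insert_of_notMem hα'nots']
              omega
            have := IH s'.card hcard' γ (by rw [hfilterγ])
            rw [hUeq, this, hfilterγ]
        rw [hWeq, hrank α', hsum, hUval]
  -- conclude
  rcases hfin.toFinset.eq_empty_or_nonempty with he | hne
  · have hall : ∀ f : V, f = 0 := by
      intro f
      by_contra hf0
      have : v f ∈ hfin.toFinset := by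
        rw [Set.Finite.mem_toFinset]
        exact ⟨f, hf0, rfl⟩
      rw [he] at this
      exact absurd this (Finset.notMem_empty _)
    haveI : Subsingleton V := subsingleton_of_forall_eq 0 fun f => (hall f).symm ▸ rfl
    rw [he, Finset.sum_empty, Module.finrank_zero_of_subsingleton]
  · set α₀ := hfin.toFinset.min' hne with hα₀
    have hWtop : W α₀ = ⊤ := by
      rw [eq_top_iff]
      intro f _
      by_cases hf0 : f = 0
      · exact hf0 ▸ (W α₀).zero_mem
      refine (hW α₀ f).2 (Or.inr (hfin.toFinset.min'_le _ ?_))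
      rw [Set.Finite.mem_toFinset]
      exact ⟨f, hf0, rfl⟩
    have hfilter : hfin.toFinset.filter (fun β => α₀ ≤ β) = hfin.toFinset := by
      apply Finset.filter_true_of_mem
      intro β hβ
      exact hfin.toFinset.min'_le β hβ
    have := key (hfin.toFinset.filter (fun β => α₀ ≤ β)).card α₀ rfl
    rw [hfilter] at this
    rw [← this, hWtop, finrank_top]
end

section
/- Let v be a Z^n-valuation on a Z_{>= 0}-graded C-algebra R with valuation extension \hat{v}(f) = (deg f, v(f_{deg f})) and associated filtration R_{<= (d,x)} := {f : \hat{v}(f) <= (d,x)} indexed by the image semigroup \Gamma. If v has one-dimensional leaves on each graded piece, then the associated graded algebra gr R := \bigoplus_{(d,x) in \Gamma} R_{<= (d,x)} / R_{< (d,x)} is isomorphic as a \Gamma-graded C-algebra to the semigroup algebra C[\Gamma]. -/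
section Aux

variable {n : ℕ} {Γ : AddSubmonoid (ℕ × (Fin n → ℤ))}
variable {A : Type*} [CommRing A] [Algebra ℂ A]
variable (ℬ : Γ → Submodule ℂ A)
variable {K : Type*} [Field K] [Algebra A K]
variable (ι : Γ → ℤ × (Fin n → ℤ))

/-- `x : Kˣ` is a homogeneous fraction of degree `d`. -/
def HgAux (x : Kˣ) (d : ℤ × (Fin n → ℤ)) : Prop :=
  ∃ (γ δ : Γ) (s t : A), s ∈ ℬ γ ∧ t ∈ ℬ δ ∧ t ≠ 0 ∧
    (x : K) * algebraMap A K t = algebraMap A K s ∧ d = ι γ - ι δ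

variable {ℬ ι}

lemma HgAux.one [Nontrivial A] (hone : (1 : A) ∈ ℬ 0) (hι0 : ι 0 = 0) :
    HgAux ℬ ι (1 : Kˣ) 0 :=
  ⟨0, 0, 1, 1, hone, hone, one_ne_zero, by simp, by simp [hι0]⟩

lemma HgAux.mul [NoZeroDivisors A]
    (hmul : ∀ (γ γ' : Γ), ∀ a ∈ ℬ γ, ∀ b ∈ ℬ γ', a * b ∈ ℬ (γ + γ'))
    (hιadd : ∀ γ δ : Γ, ι (γ + δ) = ι γ + ι δ)
    {x y : Kˣ} {d e : ℤ × (Fin n → ℤ)}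
    (hx : HgAux ℬ ι x d) (hy : HgAux ℬ ι y e) : HgAux ℬ ι (x * y) (d + e) := by
  obtain ⟨γ, δ, s, t, hs, ht, htne, heq, hd⟩ := hx
  obtain ⟨γ', δ', s', t', hs', ht', htne', heq', hd'⟩ := hy
  refine ⟨γ + γ', δ + δ', s * s', t * t', hmul _ _ _ hs _ hs', hmul _ _ _ ht _ ht',
    mul_ne_zero htne htne', ?_, ?_⟩
  · rw [map_mul, map_mul]
    push_cast
    calc (x : K) * (y : K) * (algebraMap A K t * algebraMap A K t')
        = ((x : K) * algebraMap A K t) * ((y : K) * algebraMap A K t') := by ring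
      _ = _ := by rw [heq, heq']
  · rw [hd, hd', hιadd, hιadd, sub_add_sub_comm]

lemma HgAux.inv (hinj : Function.Injective (algebraMap A K))
    {x : Kˣ} {d : ℤ × (Fin n → ℤ)} (hx : HgAux ℬ ι x d) : HgAux ℬ ι x⁻¹ (-d) := by
  obtain ⟨γ, δ, s, t, hs, ht, htne, heq, hd⟩ := hx
  have hsne : s ≠ 0 := by
    intro h
    rw [h, map_zero] at heq
    have : algebraMap A K t = 0 := by
      have := congrArg (fun z => (x⁻¹ : K) * z) heq
      simpa [mul_comm, mul_assoc, mul_left_comm] using this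
    exact htne (hinj (by rw [this, map_zero]))
  refine ⟨δ, γ, t, s, ht, hs, hsne, ?_, by rw [hd, neg_sub]⟩
  rw [← heq]
  field_simp
  simp

lemma HgAux.zpow [Nontrivial A] [NoZeroDivisors A]
    (hmul : ∀ (γ γ' : Γ), ∀ a ∈ ℬ γ, ∀ b ∈ ℬ γ', a * b ∈ ℬ (γ + γ'))
    (hone : (1 : A) ∈ ℬ 0)
    (hinj : Function.Injective (algebraMap A K))
    (hιadd : ∀ γ δ : Γ, ι (γ + δ) = ι γ + ι δ) (hι0 : ι 0 = 0)
    {x : Kˣ} {d : ℤ × (Fin n → ℤ)} (hx : HgAux ℬ ι x d) (k : ℤ) :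
    HgAux ℬ ι (x ^ k) (k • d) := by
  induction k using Int.induction_on with
  | zero => simpa using HgAux.one (K := K) hone hι0
  | succ m ih =>
      have h2 := ih.mul hmul hιadd hx
      rw [← zpow_add_one] at h2
      have h3 : ((m : ℤ) + 1) • d = (m : ℤ) • d + d := by rw [add_smul, one_smul]
      rw [h3]
      exact h2
  | pred m ih =>
      have h2 := ih.mul hmul hιadd (hx.inv hinj)
      rw [← zpow_sub_one] at h2
      have h3 : (-(m : ℤ) - 1) • d = (-(m : ℤ)) • d + -d := by
        rw [sub_smul, one_smul, sub_eq_add_neg]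
      rw [h3]
      exact h2

lemma HgAux.prod [Nontrivial A] [NoZeroDivisors A]
    (hmul : ∀ (γ γ' : Γ), ∀ a ∈ ℬ γ, ∀ b ∈ ℬ γ', a * b ∈ ℬ (γ + γ'))
    (hone : (1 : A) ∈ ℬ 0)
    (hinj : Function.Injective (algebraMap A K))
    (hιadd : ∀ γ δ : Γ, ι (γ + δ) = ι γ + ι δ) (hι0 : ι 0 = 0)
    {κ : Type*} (s : Finset κ) (x : κ → Kˣ) (d : κ → ℤ × (Fin n → ℤ)) (k : κ → ℤ)
    (h : ∀ i ∈ s, HgAux ℬ ι (x i) (d i)) :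
    HgAux ℬ ι (∏ i ∈ s, x i ^ k i) (∑ i ∈ s, k i • d i) := by
  classical
  induction s using Finset.induction_on with
  | empty => simpa using HgAux.one (K := K) hone hι0
  | insert a s hnotmem ih =>
      rw [Finset.prod_insert hnotmem, Finset.sum_insert hnotmem]
      exact ((h a (Finset.mem_insert_self a s)).zpow hmul hone hinj hιadd hι0 (k a)).mul hmul hιadd
        (ih fun i hi => h i (Finset.mem_insert_of_mem hi))

end Aux

/-- If the valuation has one-dimensional leaves, the associated graded
algebra `gr R` is isomorphic, as a `Γ`-graded `ℂ`-algebra, to the semigroup algebra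
`ℂ[Γ]`, where `Γ ⊆ ℤ_{≥0} × ℤⁿ` is the image value semigroup.

Formalization: `A` plays the role of the associated graded algebra `gr R`: it is a
commutative `ℂ`-algebra with a direct sum decomposition `ℬ` indexed by the value
semigroup `Γ` whose components are the leaves.  The hypotheses record exactly the
structure `gr R` carries: `1 ∈ ℬ 0`, the product of the `γ`- and `γ'`-components
lands in the `(γ+γ')`-component and is nonzero on nonzero elements (the defining
property of the multiplication induced by a *valuation* on the associated graded),
and — the hypothesis of the statement — each leaf `ℬ γ` is one-dimensional.  The
conclusion is a `ℂ`-algebra isomorphism `gr R ≅ ℂ[Γ]` matching the `γ`-component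
with the line spanned by the basis element `x^γ` of the semigroup algebra, i.e. an
isomorphism of `Γ`-graded algebras. -/
theorem gradedAlgebra_iso_semigroupAlgebra_of_one_dim_leaves {n : ℕ}
    (Γ : AddSubmonoid (ℕ × (Fin n → ℤ)))
    (A : Type*) [CommRing A] [Algebra ℂ A]
    (ℬ : Γ → Submodule ℂ A) [DirectSum.Decomposition ℬ]
    (hone_mem : (1 : A) ∈ ℬ 0)
    (hmul : ∀ (γ γ' : Γ), ∀ a ∈ ℬ γ, ∀ b ∈ ℬ γ', a * b ∈ ℬ (γ + γ'))
    (hmul_ne : ∀ (γ γ' : Γ), ∀ a ∈ ℬ γ, ∀ b ∈ ℬ γ', a ≠ 0 → b ≠ 0 → a * b ≠ 0)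
    (hleaf : ∀ γ : Γ, Module.finrank ℂ (ℬ γ) = 1) :
    ∃ e : A ≃ₐ[ℂ] AddMonoidAlgebra ℂ Γ, ∀ γ : Γ,
      Submodule.map (e.toLinearMap) (ℬ γ) =
        Submodule.span ℂ {AddMonoidAlgebra.single γ (1 : ℂ)} := by
  classical
  -- A is nontrivial
  haveI hnt : Nontrivial A := by
    rcases subsingleton_or_nontrivial A with h | h
    · exfalso
      have h0 : Module.finrank ℂ (ℬ 0) = 0 := by
        haveI : Subsingleton (ℬ 0) := ⟨fun a b => Subtype.ext (Subsingleton.elim _ _)⟩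
        exact Module.finrank_zero_of_subsingleton
      rw [hleaf 0] at h0; exact one_ne_zero h0
    · exact h
  -- every nonzero vector of a leaf spans it
  have span_of : ∀ (γ : Γ) (v : A), v ∈ ℬ γ → v ≠ 0 → ∀ w ∈ ℬ γ, ∃ c : ℂ, w = c • v := by
    intro γ v hvmem hvne w hw
    obtain ⟨u, hu0, hu⟩ := (finrank_eq_one_iff' (K := ℂ) (V := ℬ γ)).mp (hleaf γ)
    obtain ⟨cv, hcv⟩ := hu ⟨v, hvmem⟩
    obtain ⟨cw, hcw⟩ := hu ⟨w, hw⟩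
    have hcvne : cv ≠ 0 := by
      rintro rfl
      rw [zero_smul] at hcv
      exact hvne (by rw [show v = ((⟨v, hvmem⟩ : ℬ γ) : A) from rfl, ← hcv]; rfl)
    refine ⟨cw / cv, ?_⟩
    have h2 : (⟨w, hw⟩ : ℬ γ) = (cw / cv) • (⟨v, hvmem⟩ : ℬ γ) := by
      rw [← hcv, ← hcw, smul_smul, div_mul_cancel₀ _ hcvne]
    exact congrArg Subtype.val h2
  -- choose a basis vector in each leaf, with `b 0 = 1`
  have hbex : ∀ γ : Γ, ∃ v : A, v ∈ ℬ γ ∧ v ≠ 0 ∧ (γ = 0 → v = 1) := by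
    intro γ
    by_cases hγ : γ = 0
    · subst hγ
      exact ⟨1, hone_mem, one_ne_zero, fun _ => rfl⟩
    · obtain ⟨u, hu0, -⟩ := (finrank_eq_one_iff' (K := ℂ) (V := ℬ γ)).mp (hleaf γ)
      refine ⟨u.1, u.2, fun h => hu0 (Subtype.ext h), fun h => absurd h hγ⟩
  choose b hbmem hbne hb01 using hbex
  have hb0 : b 0 = 1 := hb01 0 rfl
  have hbspan : ∀ γ : Γ, ∀ w ∈ ℬ γ, ∃ c : ℂ, w = c • b γ :=
    fun γ => span_of γ (b γ) (hbmem γ) (hbne γ)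
  -- structure constants
  have hcex : ∀ γ δ : Γ, ∃ c : ℂ, c ≠ 0 ∧ b γ * b δ = c • b (γ + δ) := by
    intro γ δ
    obtain ⟨cc, hcc⟩ := hbspan (γ + δ) (b γ * b δ) (hmul _ _ _ (hbmem γ) _ (hbmem δ))
    refine ⟨cc, ?_, hcc⟩
    rintro rfl
    rw [zero_smul] at hcc
    exact hmul_ne _ _ _ (hbmem γ) _ (hbmem δ) (hbne γ) (hbne δ) hcc
  choose c hcne hcb using hcex
  -- A is a domain
  haveI : UniqueSums Γ :=
    UniqueSums.of_injective_addHom (AddSubmonoid.subtype Γ).toAddHom Subtype.val_injective inferInstance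
  have hnzd : ∀ x y : A, x ≠ 0 → y ≠ 0 → x * y ≠ 0 := by
    intro x y hx hy
    set Dx := DirectSum.decompose ℬ x with hDx
    set Dy := DirectSum.decompose ℬ y with hDy
    have hSx : Dx.support.Nonempty := by
      rw [Finset.nonempty_iff_ne_empty, ne_eq, DFinsupp.support_eq_empty]
      intro h
      exact hx ((DirectSum.decompose ℬ).injective
        (by rw [← hDx, h, DirectSum.decompose_zero]))
    have hSy : Dy.support.Nonempty := by
      rw [Finset.nonempty_iff_ne_empty, ne_eq, DFinsupp.support_eq_empty]
      intro h
      exact hy ((DirectSum.decompose ℬ).injective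
        (by rw [← hDy, h, DirectSum.decompose_zero]))
    obtain ⟨γ0, hγ0, δ0, hδ0, hu⟩ := UniqueSums.uniqueAdd_of_nonempty hSx hSy
    have hx0 : (Dx γ0 : A) ≠ 0 := by
      intro h
      exact (DFinsupp.mem_support_iff.mp hγ0) (Subtype.ext h)
    have hy0 : (Dy δ0 : A) ≠ 0 := by
      intro h
      exact (DFinsupp.mem_support_iff.mp hδ0) (Subtype.ext h)
    have hxy : x * y = ∑ γ ∈ Dx.support, ∑ δ ∈ Dy.support, (Dx γ : A) * (Dy δ : A) := by
      rw [← Finset.sum_mul_sum]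
      rw [show x = ∑ γ ∈ Dx.support, (Dx γ : A) from (DirectSum.sum_support_decompose ℬ x).symm,
        show y = ∑ δ ∈ Dy.support, (Dy δ : A) from (DirectSum.sum_support_decompose ℬ y).symm]
    have key : ((DirectSum.decompose ℬ (x * y)) (γ0 + δ0) : A) = (Dx γ0 : A) * (Dy δ0 : A) := by
      rw [hxy, DirectSum.decompose_sum]
      rw [DFinsupp.finset_sum_apply, AddSubmonoidClass.coe_finset_sum]
      rw [Finset.sum_eq_single_of_mem γ0 hγ0 ?h1]
      · rw [DirectSum.decompose_sum, DFinsupp.finset_sum_apply, AddSubmonoidClass.coe_finset_sum]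
        rw [Finset.sum_eq_single_of_mem δ0 hδ0 ?h2]
        · exact DirectSum.decompose_of_mem_same ℬ (hmul _ _ _ (Dx γ0).2 _ (Dy δ0).2)
        case h2 =>
          intro δ hδ hne
          refine DirectSum.decompose_of_mem_ne ℬ (hmul _ _ _ (Dx γ0).2 _ (Dy δ).2) ?_
          intro h
          exact hne (hu hγ0 hδ h).2
      case h1 =>
        intro γ hγ hne
        rw [DirectSum.decompose_sum, DFinsupp.finset_sum_apply, AddSubmonoidClass.coe_finset_sum]
        refine Finset.sum_eq_zero fun δ hδ => ?_
        refine DirectSum.decompose_of_mem_ne ℬ (hmul _ _ _ (Dx γ).2 _ (Dy δ).2) ?_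
        intro h
        exact hne (hu hγ hδ h).1
    intro h
    rw [h, DirectSum.decompose_zero] at key
    simp only [DirectSum.zero_apply, ZeroMemClass.coe_zero] at key
    exact hmul_ne _ _ _ (Dx γ0).2 _ (Dy δ0).2 hx0 hy0 key.symm
  haveI : NoZeroDivisors A := ⟨fun {a b} hab => by
    by_contra h
    push_neg at h
    exact hnzd a b h.1 h.2 hab⟩
  haveI : IsDomain A := NoZeroDivisors.to_isDomain _
  -- the fraction field
  have hKinj : Function.Injective (algebraMap A (FractionRing A)) :=
    IsFractionRing.injective _ _
  -- the degree map into `ℤ × ℤⁿ`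
  let ι : Γ → ℤ × (Fin n → ℤ) := fun γ =>
    (((γ : ℕ × (Fin n → ℤ)).1 : ℤ), (γ : ℕ × (Fin n → ℤ)).2)
  have hιadd : ∀ γ δ : Γ, ι (γ + δ) = ι γ + ι δ := by
    intro γ δ
    show ((((γ + δ : Γ) : ℕ × (Fin n → ℤ)).1 : ℤ), ((γ + δ : Γ) : ℕ × (Fin n → ℤ)).2) = _
    rw [AddSubmonoid.coe_add]
    refine Prod.ext ?_ ?_
    · push_cast
      rfl
    · rfl
  have hι0 : ι 0 = 0 := by
    show ((((0 : Γ) : ℕ × (Fin n → ℤ)).1 : ℤ), ((0 : Γ) : ℕ × (Fin n → ℤ)).2) = 0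
    rw [AddSubmonoid.coe_zero]
    rfl
  have hιinj : Function.Injective ι := by
    intro γ δ h
    obtain ⟨h1, h2⟩ := Prod.mk.injEq .. ▸ h
    refine Subtype.ext (Prod.ext ?_ h2)
    exact_mod_cast h1
  -- the lattice generated by the degrees
  set P : Submodule ℤ (ℤ × (Fin n → ℤ)) := Submodule.span ℤ (Set.range ι) with hP
  have hdiff : ∀ p ∈ P, ∃ a1 b1 : Γ, p = ι a1 - ι b1 := by
    intro p hp
    let S : AddSubgroup (ℤ × (Fin n → ℤ)) :=
      { carrier := {x | ∃ a1 b1 : Γ, x = ι a1 - ι b1}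
        zero_mem' := ⟨0, 0, by simp⟩
        add_mem' := by
          rintro x y ⟨a1, b1, rfl⟩ ⟨a2, b2, rfl⟩
          exact ⟨a1 + a2, b1 + b2, by rw [hιadd, hιadd]; abel⟩
        neg_mem' := by
          rintro x ⟨a1, b1, rfl⟩
          exact ⟨b1, a1, by abel⟩ }
    have hPS : P ≤ AddSubgroup.toIntSubmodule S := by
      rw [hP, Submodule.span_le]
      rintro _ ⟨γ, rfl⟩
      exact ⟨γ, 0, by rw [hι0, sub_zero]⟩
    exact hPS hp
  haveI : Module.Finite ℤ P := inferInstance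
  haveI : Module.Free ℤ P := inferInstance
  set bP := Module.Free.chooseBasis ℤ ↥P with hbP
  have hαβ : ∀ i, ∃ a1 b1 : Γ, ((bP i : ↥P) : ℤ × (Fin n → ℤ)) = ι a1 - ι b1 :=
    fun i => hdiff _ (bP i).2
  choose α β hαβ using hαβ
  -- units of the fraction field
  have hUne : ∀ γ : Γ, algebraMap A (FractionRing A) (b γ) ≠ 0 := by
    intro γ h
    exact hbne γ (hKinj (by rw [h, map_zero]))
  let u : Γ → (FractionRing A)ˣ := fun γ => Units.mk0 _ (hUne γ)
  have hgu : ∀ γ : Γ, HgAux ℬ ι (u γ) (ι γ) := by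
    intro γ
    exact ⟨γ, 0, b γ, 1, hbmem γ, hone_mem, one_ne_zero, by simp [u], by rw [hι0, sub_zero]⟩
  let w : ↥P → (FractionRing A)ˣ := fun p => ∏ i, (u (α i) * (u (β i))⁻¹) ^ (bP.repr p i)
  have hwadd : ∀ p q : ↥P, w (p + q) = w p * w q := by
    intro p q
    show (∏ i, (u (α i) * (u (β i))⁻¹) ^ (bP.repr (p + q) i)) = _
    rw [← Finset.prod_mul_distrib]
    refine Finset.prod_congr rfl fun i _ => ?_
    rw [map_add, Finsupp.add_apply, zpow_add]
  have hgw : ∀ p : ↥P, HgAux ℬ ι (w p) (p : ℤ × (Fin n → ℤ)) := by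
    intro p
    have h2 : ((p : ℤ × (Fin n → ℤ))) = ∑ i, (bP.repr p i) • ((bP i : ↥P) : ℤ × (Fin n → ℤ)) := by
      conv_lhs => rw [← bP.sum_repr p]
      rw [AddSubmonoidClass.coe_finset_sum]
      refine Finset.sum_congr rfl fun i _ => ?_
      rfl
    rw [h2]
    refine HgAux.prod hmul hone_mem hKinj hιadd hι0 Finset.univ _ _ _ (fun i _ => ?_)
    rw [hαβ i, sub_eq_add_neg]
    exact (hgu (α i)).mul hmul hιadd ((hgu (β i)).inv hKinj)
  -- one-dimensionality
  have hOneDim : ∀ (γ : Γ) (s t : A), s ∈ ℬ γ → t ∈ ℬ γ → t ≠ 0 → ∃ cc : ℂ, s = cc • t := by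
    intro γ s t hs ht htne
    obtain ⟨cs, rfl⟩ := hbspan γ s hs
    obtain ⟨ct, hct⟩ := hbspan γ t ht
    have hctne : ct ≠ 0 := by
      rintro rfl
      rw [zero_smul] at hct
      exact htne hct
    exact ⟨cs / ct, by rw [hct, smul_smul, div_mul_cancel₀ _ hctne]⟩
  -- homogeneous elements of degree `0` are scalars
  have hscal : ∀ x : (FractionRing A)ˣ, HgAux ℬ ι x 0 →
      ∃ lm : ℂ, lm ≠ 0 ∧ (x : FractionRing A) = algebraMap ℂ (FractionRing A) lm := by
    rintro x ⟨γ, δ, s, t, hs, ht, htne, heq, hd⟩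
    have hγδ : γ = δ := hιinj (sub_eq_zero.mp hd.symm)
    subst hγδ
    obtain ⟨cc, rfl⟩ := hOneDim γ s t hs ht htne
    have hsm : algebraMap A (FractionRing A) (cc • t)
        = algebraMap ℂ (FractionRing A) cc * algebraMap A (FractionRing A) t := by
      rw [Algebra.smul_def, map_mul, ← IsScalarTower.algebraMap_apply ℂ A (FractionRing A)]
    rw [hsm] at heq
    have htK : algebraMap A (FractionRing A) t ≠ 0 := by
      intro h
      exact htne (hKinj (by rw [h, map_zero]))
    have hx : (x : FractionRing A) = algebraMap ℂ (FractionRing A) cc :=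
      mul_right_cancel₀ htK heq
    have hcc : cc ≠ 0 := by
      rintro rfl
      rw [map_zero] at hx
      exact x.ne_zero hx
    exact ⟨cc, hcc, hx⟩
  -- the trivializing cochain
  have hpmem : ∀ γ : Γ, ι γ ∈ P := fun γ => Submodule.subset_span ⟨γ, rfl⟩
  let pm : Γ → ↥P := fun γ => ⟨ι γ, hpmem γ⟩
  have hpmadd : ∀ γ δ : Γ, pm (γ + δ) = pm γ + pm δ := fun γ δ => Subtype.ext (hιadd γ δ)
  have hglam : ∀ γ : Γ, ∃ lm : ℂ, lm ≠ 0 ∧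
      ((u γ * (w (pm γ))⁻¹ : (FractionRing A)ˣ) : FractionRing A)
        = algebraMap ℂ (FractionRing A) lm := by
    intro γ
    refine hscal _ ?_
    have h2 := (hgu γ).mul hmul hιadd ((hgw (pm γ)).inv hKinj)
    rw [show ι γ + -((pm γ : ℤ × (Fin n → ℤ))) = 0 from by
      rw [show ((pm γ : ℤ × (Fin n → ℤ))) = ι γ from rfl]; abel] at h2
    exact h2
  choose lam hlamne hlameq using hglam
  -- the cocycle relation for `lam`
  have hrel : ∀ γ δ : Γ, lam γ * lam δ = c γ δ * lam (γ + δ) := by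
    intro γ δ
    have hCinj : Function.Injective (algebraMap ℂ (FractionRing A)) := RingHom.injective _
    have hcune : algebraMap ℂ (FractionRing A) (c γ δ) ≠ 0 := by
      intro h
      exact hcne γ δ (hCinj (by rw [h, map_zero]))
    have hUU : u γ * u δ = Units.mk0 _ hcune * u (γ + δ) := by
      refine Units.ext ?_
      show algebraMap A (FractionRing A) (b γ) * algebraMap A (FractionRing A) (b δ)
        = algebraMap ℂ (FractionRing A) (c γ δ) * algebraMap A (FractionRing A) (b (γ + δ))
      rw [← map_mul, hcb, Algebra.smul_def, map_mul,
        ← IsScalarTower.algebraMap_apply ℂ A (FractionRing A)]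
    have hWW : w (pm γ) * w (pm δ) = w (pm (γ + δ)) := by rw [← hwadd, ← hpmadd]
    have hkey : (u γ * (w (pm γ))⁻¹) * (u δ * (w (pm δ))⁻¹)
        = Units.mk0 _ hcune * (u (γ + δ) * (w (pm (γ + δ)))⁻¹) := by
      rw [mul_mul_mul_comm, hUU, ← mul_inv, hWW, mul_assoc]
    apply hCinj
    rw [map_mul, ← hlameq γ, ← hlameq δ, map_mul, ← hlameq (γ + δ)]
    rw [← Units.val_mul, hkey, Units.val_mul, ← Units.val_mul, Units.val_mul]
    rfl
  have hc00 : c 0 0 = 1 := by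
    have h := hcb 0 0
    rw [hb0, one_mul, add_zero, hb0] at h
    have h2 : (1 : A) = algebraMap ℂ A (c 0 0) := by
      rw [h, Algebra.smul_def, mul_one]
    have hCinjA : Function.Injective (algebraMap ℂ A) := RingHom.injective _
    exact (hCinjA (by rw [← h2, map_one])).symm
  have hlam0 : lam 0 = 1 := by
    have h := hrel 0 0
    rw [hc00, one_mul, add_zero] at h
    exact mul_left_cancel₀ (hlamne 0) (by rw [h, mul_one])
  -- normalized basis vectors
  let e' : Γ → A := fun γ => (lam γ)⁻¹ • b γ
  have he'0 : e' 0 = 1 := by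
    show (lam 0)⁻¹ • b 0 = 1
    rw [hlam0, inv_one, one_smul, hb0]
  have he'mul : ∀ γ δ : Γ, e' γ * e' δ = e' (γ + δ) := by
    intro γ δ
    show ((lam γ)⁻¹ • b γ) * ((lam δ)⁻¹ • b δ) = (lam (γ + δ))⁻¹ • b (γ + δ)
    rw [smul_mul_smul_comm, hcb, smul_smul]
    congr 1
    have h := hrel γ δ
    field_simp [hlamne γ, hlamne δ, hlamne (γ + δ)]
    linear_combination -h
  have he'mem : ∀ γ : Γ, e' γ ∈ ℬ γ := fun γ => Submodule.smul_mem _ _ (hbmem γ)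
  have he'ne : ∀ γ : Γ, e' γ ≠ 0 := fun γ =>
    smul_ne_zero (inv_ne_zero (hlamne γ)) (hbne γ)
  -- the algebra morphism
  let F : Multiplicative Γ →* A :=
    { toFun := fun g => e' (Multiplicative.toAdd g)
      map_one' := he'0
      map_mul' := fun g h => (he'mul _ _).symm }
  let φ : AddMonoidAlgebra ℂ Γ →ₐ[ℂ] A := AddMonoidAlgebra.lift ℂ A Γ F
  have hφs : ∀ (γ : Γ) (r : ℂ), φ (AddMonoidAlgebra.single γ r) = r • e' γ := by
    intro γ r
    show (AddMonoidAlgebra.lift ℂ A Γ F) (AddMonoidAlgebra.single γ r) = r • e' γ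
    rw [AddMonoidAlgebra.lift_single]
    rfl
  have hint := DirectSum.Decomposition.isInternal ℬ
  have hLI : LinearIndependent ℂ e' :=
    hint.submodule_iSupIndep.linearIndependent ℬ he'mem he'ne
  have hφlin : ∀ z : AddMonoidAlgebra ℂ Γ, φ z = Finsupp.linearCombination ℂ e' z.coeff := by
    intro z
    induction z using AddMonoidAlgebra.induction_linear with
    | zero => simp
    | add f g hf hg => rw [map_add, AddMonoidAlgebra.coeff_add, map_add, hf, hg]
    | single γ r => rw [hφs, AddMonoidAlgebra.coeff_single, Finsupp.linearCombination_single]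
  have hφinj : Function.Injective φ := by
    intro z1 z2 h
    have h2 : Finsupp.linearCombination ℂ e' (z1 - z2).coeff = 0 := by
      rw [AddMonoidAlgebra.coeff_sub, map_sub, ← hφlin, ← hφlin, h, sub_self]
    have h3 := linearIndependent_iff.mp hLI _ h2
    exact sub_eq_zero.mp (AddMonoidAlgebra.coeff_eq_zero.mp h3)
  have hφsurj : Function.Surjective φ := by
    have hrange : ∀ γ : Γ, ℬ γ ≤ LinearMap.range φ.toLinearMap := by
      intro γ wv hw
      obtain ⟨cc, rfl⟩ := hbspan γ wv hw
      refine ⟨AddMonoidAlgebra.single γ (cc * lam γ), ?_⟩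
      show φ (AddMonoidAlgebra.single γ (cc * lam γ)) = cc • b γ
      rw [hφs]
      show (cc * lam γ) • ((lam γ)⁻¹ • b γ) = cc • b γ
      rw [smul_smul, mul_assoc, mul_inv_cancel₀ (hlamne γ), mul_one]
    intro a
    have ha : a ∈ (⊤ : Submodule ℂ A) := trivial
    rw [← hint.submodule_iSup_eq_top] at ha
    obtain ⟨z, hz⟩ := (iSup_le hrange) ha
    exact ⟨z, hz⟩
  let E := AlgEquiv.ofBijective φ ⟨hφinj, hφsurj⟩
  refine ⟨E.symm, fun γ => ?_⟩
  have hEsingle : E (AddMonoidAlgebra.single γ (1 : ℂ)) = e' γ := by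
    show φ (AddMonoidAlgebra.single γ (1 : ℂ)) = e' γ
    rw [hφs, one_smul]
  have h1 : Submodule.map E.toLinearMap
      (Submodule.span ℂ {AddMonoidAlgebra.single γ (1 : ℂ)}) = ℬ γ := by
    rw [Submodule.map_span, Set.image_singleton]
    rw [show E.toLinearMap (AddMonoidAlgebra.single γ (1 : ℂ)) = e' γ from hEsingle]
    refine le_antisymm ?_ ?_
    · rw [Submodule.span_le, Set.singleton_subset_iff]
      exact he'mem γ
    · intro wv hw
      obtain ⟨cc, rfl⟩ := hbspan γ wv hw
      have h2 : cc • b γ = (cc * lam γ) • e' γ := by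
        show cc • b γ = (cc * lam γ) • ((lam γ)⁻¹ • b γ)
        rw [smul_smul, mul_assoc, mul_inv_cancel₀ (hlamne γ), mul_one]
      rw [h2]
      exact Submodule.smul_mem _ _ (Submodule.mem_span_singleton_self _)
  rw [← h1, ← Submodule.map_comp]
  have h3 : E.symm.toLinearMap ∘ₗ E.toLinearMap = LinearMap.id := by
    ext z
    simp
  rw [h3, Submodule.map_id]
end

section
/- Given a dominant weight \lambda (i.e., \lambda in Z_{>=0}-span of fundamental weights) and a word i = (i_1,...,i_n), there exists m = (m_1,...,m_n) in Z_{>0}^n with m_j >= m(\lambda)_j for all j, such that for every \sigma in {+,-}^n and every index j with \sigma_j = -, the Cartier datum satisfies r_{\sigma,j} = A_j(r_{\sigma,j+1},...,r_{\sigma,n}) > 0 (in particular all r_{\sigma,j} >= 0). -/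
/-- The function `A_j(x_{j+1},...,x_n)` of the paper:
`A_j = ⟨∑_{l ≥ j} m_l ϖ_{β_l} - ∑_{l > j} x_l β_l, β_j^∨⟩
     = ∑_{j ≤ l ≤ n, β_l = β_j} m_l - ∑_{j < l ≤ n} ⟨β_l, β_j^∨⟩ x_l`,
for a word `w` (so `β_l = α_{w l}`), a multiplicity list `m`, and the Cartan
pairing matrix `C i j = ⟨α_i, α_j^∨⟩`; indices run over `1, ..., n`. -/
noncomputable def Afun (C : ℕ → ℕ → ℤ) (w : ℕ → ℕ) (m : ℕ → ℤ) (n j : ℕ)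
    (x : ℕ → ℝ) : ℝ :=
  (∑ l ∈ Finset.Icc j n, if w l = w j then (m l : ℝ) else 0)
    - ∑ l ∈ Finset.Ioc j n, (C (w l) (w j) : ℝ) * x l

/-- Condition (P): for every `1 ≤ k ≤ n`, every point `(x_{k+1},...,x_n)` with
`0 ≤ x_l ≤ A_l(x_{l+1},...,x_n)` for all `l > k` satisfies `A_k ≥ 0`.
(For `k = n` this is the condition `m_n ≥ 0`.) -/
def CondP (C : ℕ → ℕ → ℤ) (w : ℕ → ℕ) (m : ℕ → ℤ) (n : ℕ) : Prop :=
  ∀ k ∈ Finset.Icc 1 n, ∀ x : ℕ → ℝ,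
    (∀ l, k < l → l ≤ n → 0 ≤ x l ∧ x l ≤ Afun C w m n l x) →
      0 ≤ Afun C w m n k x
def Rfun (C : ℕ → ℕ → ℤ) (w : ℕ → ℕ) (m : ℕ → ℤ) (n : ℕ) (σ : ℕ → Bool) :
    ℕ → ℕ → ℤ
  | 0, _ => 0
  | t+1, j =>
    if σ j = true then 0 else
      (∑ l ∈ Finset.Icc j n, if w l = w j then m l else 0)
        - ∑ l ∈ Finset.Ioc j n, C (w l) (w j) * Rfun C w m n σ t l

lemma Rfun_stab (C : ℕ → ℕ → ℤ) (w : ℕ → ℕ) (m : ℕ → ℤ) (n : ℕ) (σ : ℕ → Bool) :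
    ∀ t l, n < l + t → Rfun C w m n σ (t+1) l = Rfun C w m n σ t l := by
  intro t
  induction t with
  | zero =>
    intro l hl
    simp only [Rfun, Finset.Icc_eq_empty (by omega : ¬ l ≤ n),
      Finset.Ioc_eq_empty (by omega : ¬ l < n), Finset.sum_empty, sub_zero]
    simp
  | succ t ih =>
    intro l hl
    conv_lhs => rw [Rfun]
    conv_rhs => rw [Rfun]
    congr 1
    congr 1
    apply Finset.sum_congr rfl
    intro l' hl'
    rw [Finset.mem_Ioc] at hl'
    rw [ih l' (by omega)]

lemma Rfun_fix (C : ℕ → ℕ → ℤ) (w : ℕ → ℕ) (m : ℕ → ℤ) (n : ℕ) (σ : ℕ → Bool)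
    (l : ℕ) (hl : 0 < l) :
    Rfun C w m n σ (n+1) l = if σ l = true then 0 else
      (∑ l' ∈ Finset.Icc l n, if w l' = w l then m l' else 0)
        - ∑ l' ∈ Finset.Ioc l n, C (w l') (w l) * Rfun C w m n σ (n+1) l' := by
  conv_lhs => rw [Rfun]
  congr 1
  congr 1
  apply Finset.sum_congr rfl
  intro l' hl'
  rw [Finset.mem_Ioc] at hl'
  rw [Rfun_stab C w m n σ n l' (by omega)]

lemma sum_Ioc_sub (f : ℕ → ℤ) (j n : ℕ) :
    ∑ l ∈ Finset.Ioc j n, f (n - l) = ∑ t ∈ Finset.range (n - j), f t := by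
  apply Finset.sum_nbij' (fun l => n - l) (fun t => n - t)
  · intro a ha; rw [Finset.mem_Ioc] at ha; rw [Finset.mem_range]; omega
  · intro a ha; rw [Finset.mem_range] at ha; rw [Finset.mem_Ioc]; omega
  · intro a ha; rw [Finset.mem_Ioc] at ha; omega
  · intro a ha; rw [Finset.mem_range] at ha; omega
  · intro a _; rfl

lemma geom_two_le (K : ℤ) (hK : 2 ≤ K) (s : ℕ) :
    ∑ t ∈ Finset.range (s+1), K ^ t ≤ 2 * K ^ s := by
  induction s with
  | zero => simp
  | succ s ih =>
    rw [Finset.sum_range_succ]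
    have h1 : (1:ℤ) ≤ K ^ s := one_le_pow₀ (by omega)
    have h2 : K ^ (s+1) = K * K ^ s := by ring
    nlinarith


/-- Given a dominant weight, i.e. its multiplicity list
`mλ ∈ ℤ_{≥0}ⁿ`, and a word `w`, there exists a multiplicity list `m ∈ ℤ_{>0}ⁿ`
with `m_j ≥ mλ_j` for all `j`, such that the Cartier data `r_σ` (defined
recursively by `r_{σ,j} = 0` if `σ_j = +`, and
`r_{σ,j} = A_j(r_{σ,j+1},...,r_{σ,n})` if `σ_j = -`) satisfy `r_{σ,j} > 0`
whenever `σ_j = -`; in particular all `r_{σ,j} ≥ 0`. -/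
theorem exists_multiplicity_list_with_positive_cartier_data
    (C : ℕ → ℕ → ℤ) (w : ℕ → ℕ)
    (hC2 : ∀ i, C i i = 2) (hCoff : ∀ i j, i ≠ j → C i j ≤ 0)
    (mlam : ℕ → ℤ) (hmlam : ∀ l, 0 ≤ mlam l) (n : ℕ) :
    ∃ (m : ℕ → ℤ) (rr : (ℕ → Bool) → ℕ → ℤ),
      (∀ j ∈ Finset.Icc 1 n, mlam j ≤ m j ∧ 0 < m j) ∧
      (∀ σ, ∀ j ∈ Finset.Icc 1 n, σ j = true → rr σ j = 0) ∧
      (∀ σ, ∀ j ∈ Finset.Icc 1 n, σ j = false →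
        (rr σ j : ℝ) = Afun C w m n j (fun l => (rr σ l : ℝ)) ∧ 0 < rr σ j) ∧
      (∀ σ, ∀ j ∈ Finset.Icc 1 n, 0 ≤ rr σ j) := by
  classical
  set D : ℤ := ∑ a ∈ Finset.Icc 1 n, ∑ b ∈ Finset.Icc 1 n, |C (w a) (w b)| with hDdef
  have hD0 : 0 ≤ D :=
    Finset.sum_nonneg fun a _ => Finset.sum_nonneg fun b _ => abs_nonneg _
  have hDle : ∀ a ∈ Finset.Icc 1 n, ∀ b ∈ Finset.Icc 1 n, |C (w a) (w b)| ≤ D := by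
    intro a ha b hb
    calc |C (w a) (w b)| ≤ ∑ b' ∈ Finset.Icc 1 n, |C (w a) (w b')| :=
          Finset.single_le_sum (f := fun b' => |C (w a) (w b')|)
            (fun _ _ => abs_nonneg _) hb
      _ ≤ D := by
          rw [hDdef]
          exact Finset.single_le_sum
            (f := fun a' => ∑ b' ∈ Finset.Icc 1 n, |C (w a') (w b')|)
            (fun a' _ => Finset.sum_nonneg fun _ _ => abs_nonneg _) ha
  have hDpow : ∀ s : ℕ, 1 ≤ (D+1) ^ s := fun s => one_le_pow₀ (by omega)
  have hDpow0 : ∀ s : ℕ, 0 ≤ (D+1) ^ s := fun s => le_trans zero_le_one (hDpow s)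
  set L : ℤ := 1 + ∑ l ∈ Finset.Icc 1 n, mlam l with hLdef
  have hL1 : 1 ≤ L := by
    have : 0 ≤ ∑ l ∈ Finset.Icc 1 n, mlam l := Finset.sum_nonneg fun l _ => hmlam l
    omega
  set K : ℤ := 4 * (n+1) * (D+1) ^ n + 2 with hKdef
  have hK2 : 2 ≤ K := by
    have h1 := hDpow n
    have h2 : (0:ℤ) ≤ (n:ℤ) := Int.natCast_nonneg n
    nlinarith
  have hKpow : ∀ s : ℕ, 1 ≤ K ^ s := fun s => one_le_pow₀ (by omega)
  set m : ℕ → ℤ := fun j => L * K ^ (n - j) with hmdef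
  have hm1 : ∀ j, 1 ≤ m j := by
    intro j
    have h := hKpow (n - j)
    have h2 : (1:ℤ) * 1 ≤ L * K ^ (n - j) := mul_le_mul hL1 h zero_le_one (by linarith)
    show (1:ℤ) ≤ L * K ^ (n - j)
    linarith
  have hm0 : ∀ j, 0 ≤ m j := fun j => le_trans zero_le_one (hm1 j)
  set S : ℕ → ℤ := fun j => ∑ l ∈ Finset.Icc j n, m l with hSdef
  have hS0 : ∀ j, 0 ≤ S j := fun j => Finset.sum_nonneg fun l _ => hm0 l
  have hSmono : ∀ j l, j ≤ l → S l ≤ S j := by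
    intro j l hjl
    apply Finset.sum_le_sum_of_subset_of_nonneg
    · exact Finset.Icc_subset_Icc hjl le_rfl
    · intro i _ _; exact hm0 i
  set B : ℕ → ℤ := fun j => (D+1) ^ (n - j) * S j with hBdef
  have hB0 : ∀ j, 0 ≤ B j := fun j => mul_nonneg (hDpow0 _) (hS0 j)
  -- explicit bound for tails of S
  have hSle : ∀ j, j < n → S (j+1) ≤ 2 * L * K ^ (n - j - 1) := by
    intro j hjn
    have hS : S (j+1) = L * ∑ t ∈ Finset.range (n - j), K ^ t := by
      have h1 : S (j+1) = ∑ l ∈ Finset.Ioc j n, L * K ^ (n - l) := by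
        rw [hSdef]; rw [← Finset.Icc_add_one_left_eq_Ioc]
      have h2 : ∑ l ∈ Finset.Ioc j n, L * K ^ (n - l)
          = ∑ t ∈ Finset.range (n - j), L * K ^ t :=
        sum_Ioc_sub (fun t => L * K ^ t) j n
      rw [h1, h2, Finset.mul_sum]
    rw [hS, show n - j = (n - j - 1) + 1 by omega]
    have hgeom := geom_two_le K hK2 (n - j - 1)
    calc L * ∑ t ∈ Finset.range (n - j - 1 + 1), K ^ t
        ≤ L * (2 * K ^ (n - j - 1)) := by
          apply mul_le_mul_of_nonneg_left hgeom (by omega)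
      _ = 2 * L * K ^ (n - j - 1) := by ring
  -- key inequality: m j dominates 1 + 2 ∑_{l > j} B l
  have key : ∀ j, 1 ≤ j → j ≤ n → 1 + 2 * ∑ l ∈ Finset.Ioc j n, B l ≤ m j := by
    intro j hj1 hjn
    rcases eq_or_lt_of_le hjn with rfl | hjlt
    · simp only [Finset.Ioc_self, Finset.sum_empty, mul_zero, add_zero]
      exact hm1 j
    · have hBle : ∀ l ∈ Finset.Ioc j n, B l ≤ (D+1) ^ (n-1) * S (j+1) := by
        intro l hl
        rw [Finset.mem_Ioc] at hl
        have hp : (D+1) ^ (n - l) ≤ (D+1) ^ (n-1) :=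
          pow_le_pow_right₀ (by omega) (by omega)
        exact mul_le_mul hp (hSmono (j+1) l (by omega)) (hS0 l) (hDpow0 _)
      have hcard : (Finset.Ioc j n).card = n - j := Nat.card_Ioc j n
      have hsum : ∑ l ∈ Finset.Ioc j n, B l ≤ (n - j : ℕ) * ((D+1) ^ (n-1) * S (j+1)) := by
        have := Finset.sum_le_card_nsmul _ _ _ hBle
        rwa [hcard, nsmul_eq_mul] at this
      have hS2 := hSle j hjlt
      set P : ℤ := K ^ (n - j - 1) with hPdef
      have hP1 : 1 ≤ P := hKpow _
      have hQle : (D+1) ^ (n-1) ≤ (D+1) ^ n := pow_le_pow_right₀ (by omega) (by omega)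
      have hQ1 : 1 ≤ (D+1) ^ (n-1) := hDpow _
      have hnj : ((n - j : ℕ) : ℤ) ≤ (n : ℤ) := by
        exact_mod_cast Nat.cast_le.mpr (Nat.sub_le n j)
      have hmj : m j = L * (K * P) := by
        show L * K ^ (n - j) = L * (K * P)
        rw [show n - j = (n - j - 1) + 1 by omega, hPdef]; ring
      have h1 : ∑ l ∈ Finset.Ioc j n, B l ≤ (n:ℤ) * ((D+1) ^ (n-1) * (2 * L * P)) := by
        calc ∑ l ∈ Finset.Ioc j n, B l
            ≤ (n - j : ℕ) * ((D+1) ^ (n-1) * S (j+1)) := hsum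
          _ ≤ (n:ℤ) * ((D+1) ^ (n-1) * (2 * L * P)) := by
              apply mul_le_mul hnj _ _ (by exact_mod_cast Nat.zero_le n)
              · exact mul_le_mul_of_nonneg_left hS2 (hDpow0 _)
              · exact mul_nonneg (hDpow0 _) (hS0 _)
      rw [hmj, hKdef]
      have hLP : 1 ≤ L * P := le_trans hP1 (le_mul_of_one_le_left (by omega) hL1)
      have hQ'LP : 1 ≤ (D+1) ^ n * (L * P) := by nlinarith [hDpow n, hLP]
      have q5 : (n:ℤ) * ((D+1) ^ (n-1) * (L * P)) ≤ (n:ℤ) * ((D+1) ^ n * (L * P)) := by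
        apply mul_le_mul_of_nonneg_left _ (Int.natCast_nonneg n)
        exact mul_le_mul_of_nonneg_right hQle (by linarith)
      nlinarith [h1, q5, hQ'LP, hLP, Int.natCast_nonneg n]
  -- the Cartier data
  set rr : (ℕ → Bool) → ℕ → ℤ := fun σ => Rfun C w m n σ (n+1) with hrrdef
  have hfix : ∀ σ l, 0 < l → rr σ l = if σ l = true then 0 else
      (∑ l' ∈ Finset.Icc l n, if w l' = w l then m l' else 0)
        - ∑ l' ∈ Finset.Ioc l n, C (w l') (w l) * rr σ l' := by
    intro σ l hl
    exact Rfun_fix C w m n σ l hl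
  have main : ∀ d j, n ≤ j + d → 1 ≤ j → j ≤ n → ∀ σ,
      0 ≤ rr σ j ∧ rr σ j ≤ B j ∧ (σ j = false → 1 ≤ rr σ j) := by
    intro d
    induction d using Nat.strong_induction_on with
    | _ d IH =>
      intro j hd hj1 hjn σ
      have hIoc : ∀ l ∈ Finset.Ioc j n, 0 ≤ rr σ l ∧ rr σ l ≤ B l := by
        intro l hl
        rw [Finset.mem_Ioc] at hl
        obtain ⟨h0, hB, _⟩ := IH (d-1) (by omega) l (by omega) (by omega) (by omega) σ
        exact ⟨h0, hB⟩
      cases hσ : σ j with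
      | true =>
        have h0 : rr σ j = 0 := by rw [hfix σ j (by omega)]; simp [hσ]
        rw [h0]
        exact ⟨le_refl 0, hB0 j, by simp⟩
      | false =>
        have heq : rr σ j = (∑ l ∈ Finset.Icc j n, if w l = w j then m l else 0)
            - ∑ l ∈ Finset.Ioc j n, C (w l) (w j) * rr σ l := by
          rw [hfix σ j (by omega)]; simp [hσ]
        -- lower bound
        have hTm : m j ≤ ∑ l ∈ Finset.Icc j n, (if w l = w j then m l else 0) := by
          have h := Finset.single_le_sum (f := fun l => if w l = w j then m l else 0)
            (fun i _ => by by_cases hwi : w i = w j <;> simp [hwi, hm0 i])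
            (Finset.mem_Icc.mpr ⟨le_refl j, hjn⟩)
          simpa using h
        have hlow : ∀ l ∈ Finset.Ioc j n, C (w l) (w j) * rr σ l ≤ 2 * B l := by
          intro l hl
          obtain ⟨h0, hB⟩ := hIoc l hl
          by_cases hw : w l = w j
          · rw [hw, hC2]
            exact mul_le_mul_of_nonneg_left hB (by norm_num)
          · have hC := hCoff (w l) (w j) hw
            have : C (w l) (w j) * rr σ l ≤ 0 := mul_nonpos_of_nonpos_of_nonneg hC h0
            linarith [hB0 l]
        have h2 : ∑ l ∈ Finset.Ioc j n, C (w l) (w j) * rr σ l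
            ≤ 2 * ∑ l ∈ Finset.Ioc j n, B l := by
          rw [Finset.mul_sum]
          exact Finset.sum_le_sum hlow
        have hge : m j - 2 * ∑ l ∈ Finset.Ioc j n, B l ≤ rr σ j := by
          rw [heq]; exact sub_le_sub hTm h2
        have h1le : 1 ≤ rr σ j := by
          have := key j hj1 hjn
          linarith
        -- upper bound
        have hTS : ∑ l ∈ Finset.Icc j n, (if w l = w j then m l else 0) ≤ S j := by
          apply Finset.sum_le_sum
          intro i _
          by_cases hwi : w i = w j <;> simp [hwi, hm0 i]
        have hup : ∀ l ∈ Finset.Ioc j n, -(C (w l) (w j) * rr σ l) ≤ D * B l := by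
          intro l hl
          obtain ⟨h0, hB⟩ := hIoc l hl
          rw [Finset.mem_Ioc] at hl
          have habs : |C (w l) (w j)| ≤ D :=
            hDle l (Finset.mem_Icc.mpr ⟨by omega, hl.2⟩) j (Finset.mem_Icc.mpr ⟨hj1, hjn⟩)
          have h1 : -(C (w l) (w j)) ≤ D := le_trans (neg_le_abs _) habs
          calc -(C (w l) (w j) * rr σ l) = (-(C (w l) (w j))) * rr σ l := by ring
            _ ≤ D * rr σ l := mul_le_mul_of_nonneg_right h1 h0
            _ ≤ D * B l := mul_le_mul_of_nonneg_left hB hD0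
        have hup2 : -(∑ l ∈ Finset.Ioc j n, C (w l) (w j) * rr σ l)
            ≤ D * ∑ l ∈ Finset.Ioc j n, B l := by
          rw [← Finset.sum_neg_distrib, Finset.mul_sum]
          exact Finset.sum_le_sum hup
        have hsumB : ∑ l ∈ Finset.Ioc j n, B l
            ≤ (∑ t ∈ Finset.range (n - j), (D+1) ^ t) * S j := by
          calc ∑ l ∈ Finset.Ioc j n, B l
              ≤ ∑ l ∈ Finset.Ioc j n, (D+1) ^ (n - l) * S j := by
                apply Finset.sum_le_sum
                intro l hl
                rw [Finset.mem_Ioc] at hl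
                exact mul_le_mul_of_nonneg_left (hSmono j l (by omega)) (hDpow0 _)
            _ = (∑ l ∈ Finset.Ioc j n, (D+1) ^ (n - l)) * S j := by
                rw [Finset.sum_mul]
            _ = (∑ t ∈ Finset.range (n - j), (D+1) ^ t) * S j := by
                rw [sum_Ioc_sub (fun t => (D+1) ^ t) j n]
        have hgeomid : D * ∑ t ∈ Finset.range (n - j), (D+1) ^ t = (D+1) ^ (n - j) - 1 := by
          have := geom_sum_mul (D+1) (n - j)
          calc D * ∑ t ∈ Finset.range (n - j), (D+1) ^ t
              = (∑ t ∈ Finset.range (n - j), (D+1) ^ t) * ((D+1) - 1) := by ring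
            _ = (D+1) ^ (n - j) - 1 := this
        have hBj : rr σ j ≤ B j := by
          have h3 : rr σ j ≤ S j + D * ∑ l ∈ Finset.Ioc j n, B l := by
            rw [heq]
            have := hup2
            linarith [hTS]
          have h4 : D * ∑ l ∈ Finset.Ioc j n, B l
              ≤ ((D+1) ^ (n - j) - 1) * S j := by
            calc D * ∑ l ∈ Finset.Ioc j n, B l
                ≤ D * ((∑ t ∈ Finset.range (n - j), (D+1) ^ t) * S j) :=
                  mul_le_mul_of_nonneg_left hsumB hD0
              _ = (D * ∑ t ∈ Finset.range (n - j), (D+1) ^ t) * S j := by ring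
              _ = ((D+1) ^ (n - j) - 1) * S j := by rw [hgeomid]
          have : S j + ((D+1) ^ (n - j) - 1) * S j = B j := by rw [hBdef]; ring
          linarith
        exact ⟨by linarith, hBj, fun _ => h1le⟩
  refine ⟨m, rr, ?_, ?_, ?_, ?_⟩
  · intro j hj
    rw [Finset.mem_Icc] at hj
    constructor
    · have h1 : mlam j ≤ ∑ l ∈ Finset.Icc 1 n, mlam l :=
        Finset.single_le_sum (fun l _ => hmlam l) (Finset.mem_Icc.mpr hj)
      have h2 : L ≤ m j := by
        have := hKpow (n - j)
        calc L = L * 1 := by ring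
          _ ≤ L * K ^ (n - j) := mul_le_mul_of_nonneg_left this (by omega)
      rw [hLdef] at h2
      omega
    · exact lt_of_lt_of_le zero_lt_one (hm1 j)
  · intro σ j hj hσ
    rw [Finset.mem_Icc] at hj
    rw [hfix σ j (by omega)]
    simp [hσ]
  · intro σ j hj hσ
    rw [Finset.mem_Icc] at hj
    obtain ⟨_, _, h3⟩ := main n j (by omega) hj.1 hj.2 σ
    constructor
    · have heq : rr σ j = (∑ l ∈ Finset.Icc j n, if w l = w j then m l else 0)
          - ∑ l ∈ Finset.Ioc j n, C (w l) (w j) * rr σ l := by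
        rw [hfix σ j (by omega)]; simp [hσ]
      rw [heq, Afun]
      push_cast [apply_ite (fun z : ℤ => (z : ℝ))]
      ring
    · exact lt_of_lt_of_le zero_lt_one (h3 hσ)
  · intro σ j hj
    rw [Finset.mem_Icc] at hj
    exact (main n j (by omega) hj.1 hj.2 σ).1
end

section
/- For G = SL_3 with word i = (1,2,1) and m = (0,1,1), the polytope P_{i,m} = {(x_1,x_2,x_3) in R^3 : 0 <= x_3 <= 1, 0 <= x_2 <= 1 + x_3, 0 <= x_1 <= x_2 - 2x_3 + 1} has the non-integral point (0, 0, 1/2) as a vertex; in particular P_{i,m} is not a lattice polytope. -/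
/-- The polytope `P_{i,m}` for `G = SL₃`, `i = (1,2,1)`, `m = (0,1,1)`:
`{(x₁,x₂,x₃) : 0 ≤ x₃ ≤ 1, 0 ≤ x₂ ≤ 1 + x₃, 0 ≤ x₁ ≤ 1 + x₂ - 2x₃}`
(coordinates `x 0 = x₁`, `x 1 = x₂`, `x 2 = x₃`). -/
def Psl3 : Set (Fin 3 → ℝ) :=
  {x | 0 ≤ x 2 ∧ x 2 ≤ 1 ∧ 0 ≤ x 1 ∧ x 1 ≤ 1 + x 2 ∧
       0 ≤ x 0 ∧ x 0 ≤ 1 + x 1 - 2 * x 2}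

set_option maxHeartbeats 1000000 in
/-- the non-integral point `(0, 0, 1/2)` is a vertex (extreme point)
of `P_{i,m}` for `i = (1,2,1)`, `m = (0,1,1)` in `SL₃`; in particular `P_{i,m}` is
not a lattice polytope. -/
theorem sl3_polytope_has_nonintegral_vertex :
    (![0, 0, (1:ℝ)/2] ∈ Set.extremePoints ℝ Psl3) ∧
    ¬ ∃ q : Fin 3 → ℤ, (fun i => (q i : ℝ)) = ![0, 0, (1:ℝ)/2] := by
  constructor
  · constructor
    · simp [Psl3]; norm_num
    · intro y hy z hz hseg
      obtain ⟨a, b, ha, hb, hab, hcomb⟩ := hseg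
      obtain ⟨hy2, hy2', hy1, hy1', hy0, hy0'⟩ := hy
      obtain ⟨hz2, hz2', hz1, hz1', hz0, hz0'⟩ := hz
      have h0 := congrFun hcomb 0
      have h1 := congrFun hcomb 1
      have h2 := congrFun hcomb 2
      simp [Pi.add_apply, Pi.smul_apply, smul_eq_mul] at h0 h1 h2
      -- y 1 = 0 and z 1 = 0
      have hy1e : y 1 = 0 := by nlinarith
      have hz1e : z 1 = 0 := by nlinarith
      have hy0e : y 0 = 0 := by nlinarith
      have hz0e : z 0 = 0 := by nlinarith
      -- from x0 ≤ 1 + x1 - 2x2: y 2 ≤ 1/2, z 2 ≤ 1/2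
      have hy2le : y 2 ≤ 1/2 := by rw [hy1e, hy0e] at hy0'; linarith
      have hz2le : z 2 ≤ 1/2 := by rw [hz1e, hz0e] at hz0'; linarith
      have hy2e : y 2 = 1/2 := by nlinarith
      have hz2e : z 2 = 1/2 := by nlinarith
      refine funext fun i => ?_ <;> fin_cases i <;>
        simp only [Matrix.cons_val_zero, Matrix.cons_val_one, Matrix.head_cons,
          Matrix.cons_val_two, Matrix.tail_cons] <;>
        first
          | exact hy0e | exact hy1e | exact hy2e
          | exact hz0e | exact hz1e | exact hz2e
  · rintro ⟨q, hq⟩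
    have := congrFun hq 2
    simp at this
    have : (2 : ℝ) * (q 2 : ℝ) = 1 := by rw [this]; ring
    have h2 : (2 * q 2 : ℤ) = 1 := by exact_mod_cast this
    omega
end
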